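/- Suppose A1 holds, ψ is twice differentiable, and F = f + ψ. Let ε > 0, m ≥ 1 an integer, x₀ ∈ Q, and let B be a symmetric matrix with ‖B − ∇²f(x₀)‖ ≤ (√n·L/2)·h, where σ ≥ 2⁴·(2/3)^{1/3}·m·L and 0 < h ≤ [3·σ^{3/2}·ε^{3/2} / (2⁷·192·n^{3/2}·L³)]^{1/3}. Let x₁, …, x_m ∈ Q be such that for each t = 0, …, m−1, x_{t+1} satisfies M_{x_t,σ}(x_{t+1}) + ψ(x_{t+1}) ≤ F(x_t), ‖∇M_{x_t,σ}(x_{t+1}) + ψ'(x_{t+1})‖ ≤ (σ/4)‖x_{t+1} − x_t‖² for some ψ'(x_{t+1}) ∈ ∂ψ(x_{t+1}), and B + σ‖x_{t+1} − x_t‖·I + ∇²ψ(x_{t+1}) ⪰ 0, where in the model one takes g = ∇f(x_t) and the same B for all t. Then either min_{1 ≤ t ≤ m} max{ ‖∇f(x_t) + ψ'(x_t)‖, (1/σ)·(2/3)^{10/3}·ξ(x_t)² } ≤ ε, or F(x₀) − F(x_m) ≥ m·ε^{3/2} / (2·192·σ^{1/2}). -/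

import Mathlib

open RealInnerProductSpace Set

section helpers
variable {n : ℕ}
local notation "E" => EuclideanSpace ℝ (Fin n)


lemma grad_contDiff {f : E → ℝ} (hf : ContDiff ℝ 2 f) : ContDiff ℝ 1 (gradient f) := by
  have h1 : ContDiff ℝ 1 (fderiv ℝ f) := by
    have := (contDiff_succ_iff_fderiv (n := 1)).mp (by norm_num at hf ⊢; exact hf)
    exact this.2.2
  exact ((InnerProductSpace.toDual ℝ E).symm.contDiff).comp h1

lemma grad_hasFDerivAt {f : E → ℝ} (hf : ContDiff ℝ 2 f) (y : E) :
    HasFDerivAt (gradient f) (fderiv ℝ (gradient f) y) y :=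
  ((grad_contDiff hf).differentiable one_ne_zero y).hasFDerivAt

lemma line_hasDerivAt (x d : E) (s : ℝ) : HasDerivAt (fun s : ℝ => x + s • d) d s := by
  simpa using ((hasDerivAt_id s).smul_const d).const_add x

/-- Taylor bound for the gradient under Lipschitz Hessian. -/
lemma grad_taylor {f : E → ℝ} (hf : ContDiff ℝ 2 f) {L : ℝ}
    (hLip : ∀ u v : E, ‖fderiv ℝ (gradient f) v - fderiv ℝ (gradient f) u‖ ≤ L * ‖v - u‖)
    (x y : E) :
    ‖gradient f y - gradient f x - fderiv ℝ (gradient f) x (y - x)‖ ≤ L / 2 * ‖y - x‖ ^ 2 := by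
  set d := y - x with hd
  set G := gradient f
  set H := fun z => fderiv ℝ G z with hH
  set φ : ℝ → E := fun s => G (x + s • d) - G x - s • (H x d) with hφ
  set φ' : ℝ → E := fun s => H (x + s • d) d - H x d with hφ'
  have hGd : ∀ s : ℝ, HasDerivAt (fun s : ℝ => G (x + s • d)) (H (x + s • d) d) s := fun s => by
    have := (grad_hasFDerivAt hf (x + s • d)).comp_hasDerivAt s (line_hasDerivAt x d s); exact this
  have hder : ∀ s : ℝ, HasDerivAt φ (φ' s) s := by
    intro s
    have := ((hGd s).sub_const (G x)).fun_sub ((hasDerivAt_id s).smul_const (H x d))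
    simpa [φ, φ', one_smul] using this
  have hB : ∀ s : ℝ, HasDerivAt (fun s : ℝ => L * ‖d‖ ^ 2 / 2 * s ^ 2) (L * ‖d‖ ^ 2 * s) s := by
    intro s
    have := (hasDerivAt_pow 2 s).const_mul (L * ‖d‖ ^ 2 / 2)
    refine this.congr_deriv ?_
    ring
  have bound : ∀ s ∈ Ico (0:ℝ) 1, ‖φ' s‖ ≤ L * ‖d‖ ^ 2 * s := by
    intro s hs
    have h1 : ‖φ' s‖ ≤ ‖H (x + s • d) - H x‖ * ‖d‖ := by
      rw [hφ']
      have := (H (x + s • d) - H x).le_opNorm d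
      rwa [ContinuousLinearMap.sub_apply] at this
    have h2 : ‖H (x + s • d) - H x‖ ≤ L * (s * ‖d‖) := by
      have := hLip x (x + s • d)
      rw [add_sub_cancel_left, norm_smul, Real.norm_eq_abs, abs_of_nonneg hs.1] at this
      exact this
    have hdn : (0:ℝ) ≤ ‖d‖ := norm_nonneg d
    calc ‖φ' s‖ ≤ (L * (s * ‖d‖)) * ‖d‖ := h1.trans (mul_le_mul_of_nonneg_right h2 hdn)
      _ = L * ‖d‖ ^ 2 * s := by ring
  have key : ∀ ⦃s : ℝ⦄, s ∈ Icc (0:ℝ) 1 → ‖φ s‖ ≤ L * ‖d‖ ^ 2 / 2 * s ^ 2 :=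
    image_norm_le_of_norm_deriv_right_le_deriv_boundary
      (fun s _ => (hder s).continuousAt.continuousWithinAt)
      (fun s _ => (hder s).hasDerivWithinAt)
      (by simp [φ]) hB bound
  have h1 := key (right_mem_Icc.mpr zero_le_one)
  have hy : x + d = y := by rw [hd]; abel
  simp only [hφ, one_smul, hy] at h1
  calc ‖G y - G x - H x d‖ ≤ L * ‖d‖ ^ 2 / 2 * 1 ^ 2 := h1
    _ = L / 2 * ‖d‖ ^ 2 := by ring

lemma inner_grad_eq {f : E → ℝ} (z v : E) :
    ⟪gradient f z, v⟫ = fderiv ℝ f z v := InnerProductSpace.toDual_symm_apply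

/-- Cubic Taylor upper bound for the function under Lipschitz Hessian. -/
lemma func_taylor {f : E → ℝ} (hf : ContDiff ℝ 2 f) {L : ℝ}
    (hLip : ∀ u v : E, ‖fderiv ℝ (gradient f) v - fderiv ℝ (gradient f) u‖ ≤ L * ‖v - u‖)
    (x y : E) :
    f y ≤ f x + ⟪gradient f x, y - x⟫ + 1 / 2 * ⟪fderiv ℝ (gradient f) x (y - x), y - x⟫
      + L / 6 * ‖y - x‖ ^ 3 := by
  set d := y - x with hd
  set G := gradient f with hG
  set H := fun z => fderiv ℝ G z with hH
  set φ : ℝ → ℝ := fun s => f (x + s • d) - f x - s * ⟪G x, d⟫ - s ^ 2 / 2 * ⟪H x d, d⟫ with hφ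
  set φ' : ℝ → ℝ := fun s => ⟪G (x + s • d) - G x - s • (H x d), d⟫ with hφ'
  have hfd : ∀ s : ℝ, HasDerivAt (fun s : ℝ => f (x + s • d)) (⟪G (x + s • d), d⟫) s := by
    intro s
    have h0 := ((hf.differentiable (by norm_num) (x + s • d)).hasFDerivAt).comp_hasDerivAt
      s (line_hasDerivAt x d s)
    rwa [← inner_grad_eq] at h0
  have hder : ∀ s : ℝ, HasDerivAt φ (φ' s) s := by
    intro s
    have h1 : HasDerivAt (fun s : ℝ => s * ⟪G x, d⟫) (⟪G x, d⟫) s := by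
      simpa using (hasDerivAt_id s).mul_const (⟪G x, d⟫)
    have h2 : HasDerivAt (fun s : ℝ => s ^ 2 / 2 * ⟪H x d, d⟫) (s * ⟪H x d, d⟫) s := by
      have := (hasDerivAt_pow 2 s).div_const 2
      have := this.mul_const (⟪H x d, d⟫)
      refine this.congr_deriv ?_
      ring
    have := (((hfd s).sub_const (f x)).sub h1).sub h2
    have heq : ⟪G (x + s • d), d⟫ - ⟪G x, d⟫ - s * ⟪H x d, d⟫ = φ' s := by
      simp only [hφ', inner_sub_left, real_inner_smul_left]
    rw [← heq]
    exact this
  have hB : ∀ s : ℝ, HasDerivAt (fun s : ℝ => L * ‖d‖ ^ 3 / 6 * s ^ 3) (L * ‖d‖ ^ 3 / 2 * s ^ 2) s := by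
    intro s
    have := (hasDerivAt_pow 3 s).const_mul (L * ‖d‖ ^ 3 / 6)
    refine this.congr_deriv ?_
    ring
  have bound : ∀ s ∈ Set.Ico (0:ℝ) 1, ‖φ' s‖ ≤ L * ‖d‖ ^ 3 / 2 * s ^ 2 := by
    intro s hs
    have htay := grad_taylor hf hLip x (x + s • d)
    rw [add_sub_cancel_left] at htay
    rw [map_smul] at htay
    have hns : ‖s • d‖ ^ 2 = s ^ 2 * ‖d‖ ^ 2 := by
      rw [norm_smul, Real.norm_eq_abs, mul_pow, sq_abs]
    rw [hns] at htay
    have hcs := abs_real_inner_le_norm (G (x + s • d) - G x - s • (H x d)) d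
    calc ‖φ' s‖ ≤ ‖G (x + s • d) - G x - s • (H x d)‖ * ‖d‖ := hcs
      _ ≤ L / 2 * (s ^ 2 * ‖d‖ ^ 2) * ‖d‖ :=
          mul_le_mul_of_nonneg_right htay (norm_nonneg d)
      _ = L * ‖d‖ ^ 3 / 2 * s ^ 2 := by ring
  have key : ∀ ⦃s : ℝ⦄, s ∈ Set.Icc (0:ℝ) 1 → ‖φ s‖ ≤ L * ‖d‖ ^ 3 / 6 * s ^ 3 :=
    image_norm_le_of_norm_deriv_right_le_deriv_boundary
      (fun s _ => (hder s).continuousAt.continuousWithinAt)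
      (fun s _ => (hder s).hasDerivWithinAt)
      (by simp [hφ]) hB bound
  have h1 := key (right_mem_Icc.mpr zero_le_one)
  have hy : x + d = y := by rw [hd]; abel
  simp only [hφ, one_smul, hy, one_pow, mul_one] at h1
  have h2 := (le_abs_self _).trans h1
  rw [show fderiv ℝ G x = H x from rfl]
  linarith [h2]

lemma gradient_add {f ψ : E → ℝ} (hf : ContDiff ℝ 2 f) (hψ : ContDiff ℝ 2 ψ) :
    gradient (fun y => f y + ψ y) = fun y => gradient f y + gradient ψ y := by
  funext y
  unfold gradient
  rw [fderiv_fun_add ((hf.differentiable (by norm_num)) y) ((hψ.differentiable (by norm_num)) y)]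
  exact map_add _ _ _

lemma hessF_apply {f ψ : E → ℝ} (hf : ContDiff ℝ 2 f) (hψ : ContDiff ℝ 2 ψ) (y v : E) :
    fderiv ℝ (gradient (fun y => f y + ψ y)) y v
      = fderiv ℝ (gradient f) y v + fderiv ℝ (gradient ψ) y v := by
  rw [gradient_add hf hψ]
  rw [fderiv_fun_add ((grad_contDiff hf).differentiable one_ne_zero y)
    ((grad_contDiff hψ).differentiable one_ne_zero y)]
  rfl

lemma cbrt_twothirds_ge : (87:ℝ)/100 ≤ ((2:ℝ)/3) ^ ((1:ℝ)/3) := by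
  have h1 : ((87:ℝ)/100) ^ (3:ℕ) ≤ 2/3 := by norm_num
  have h2 := Real.rpow_le_rpow (by positivity) h1 (by norm_num : (0:ℝ) ≤ 1/3)
  rwa [← Real.rpow_natCast ((87:ℝ)/100) 3, ← Real.rpow_mul (by norm_num : (0:ℝ) ≤ 87/100),
    show ((3:ℕ):ℝ) * (1/3) = 1 by norm_num, Real.rpow_one] at h2

lemma twothirds_pow_tenthirds_le : ((2:ℝ)/3) ^ ((10:ℝ)/3) ≤ 26/100 := by
  have ha : (0:ℝ) ≤ ((2:ℝ)/3) ^ ((10:ℝ)/3) := Real.rpow_nonneg (by norm_num) _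
  have h3 : (((2:ℝ)/3) ^ ((10:ℝ)/3)) ^ (3:ℕ) = ((2:ℝ)/3) ^ (10:ℕ) := by
    rw [← Real.rpow_natCast (((2:ℝ)/3) ^ ((10:ℝ)/3)) 3, ← Real.rpow_mul (by norm_num : (0:ℝ) ≤ 2/3),
      show (10:ℝ)/3 * ((3:ℕ):ℝ) = ((10:ℕ):ℝ) by norm_num, Real.rpow_natCast]
  have : (((2:ℝ)/3) ^ ((10:ℝ)/3)) ^ (3:ℕ) ≤ ((26:ℝ)/100) ^ (3:ℕ) := by
    rw [h3]; norm_num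
  exact le_of_pow_le_pow_left₀ (by norm_num) (by norm_num) this

lemma rpow_three_halves_eq {a : ℝ} (ha : 0 ≤ a) : a ^ ((3:ℝ)/2) = Real.sqrt a ^ (3:ℕ) := by
  rw [Real.sqrt_eq_rpow, ← Real.rpow_natCast (a ^ ((1:ℝ)/2)) 3, ← Real.rpow_mul ha]
  norm_num



lemma norm_comb {G : Type*} [SeminormedAddCommGroup G] (a b c w : G) :
    ‖a + b + c - w‖ ≤ ‖a‖ + ‖b‖ + ‖c‖ + ‖w‖ := by
  calc ‖a + b + c - w‖ ≤ ‖a + b + c‖ + ‖w‖ := norm_sub_le _ _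
    _ ≤ ‖a + b‖ + ‖c‖ + ‖w‖ := by linarith [norm_add_le (a+b) c]
    _ ≤ ‖a‖ + ‖b‖ + ‖c‖ + ‖w‖ := by linarith [norm_add_le a b]


lemma grad_case_arith {σ ρ rt δ LB L : ℝ} (hσ : 0 < σ) (hρ : 0 < ρ) (hrt : 0 ≤ rt)
    (hL13 : L ≤ σ/13) (hδL : δ + LB ≤ 21/40*(σ*ρ))
    (hlt : σ*ρ^2 < L/2*rt^2 + (δ+LB)*rt + σ/4*rt^2 + σ/2*rt*rt) : 7/10*ρ ≤ rt := by
  by_contra hcon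
  push_neg at hcon
  nlinarith [mul_le_mul_of_nonneg_right hδL hrt,
    mul_lt_mul_of_pos_left hcon (mul_pos hσ hρ),
    mul_le_mul_of_nonneg_left hcon.le hrt,
    mul_pos hσ (mul_pos hρ hρ), mul_nonneg hσ.le hrt, sq_nonneg rt]

lemma final_arith {D P Q : ℝ} (hQ : 0 ≤ Q)
    (hD : D ≥ P/6 - P/78 - (P/60 + Q/120)/2 - P/26)
    (hPQ : 343/1000 * Q ≤ P) : Q/384 ≤ D := by linarith

end helpers

/-- `negEigPart F y` is ξ(y) = max{−λ_min(∇²F(y)), 0}, defined as the least `c ≥ 0` such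
that `∇²F(y) ⪰ −c·I`. -/
noncomputable def negEigPart {n : ℕ} (F : EuclideanSpace ℝ (Fin n) → ℝ)
    (y : EuclideanSpace ℝ (Fin n)) : ℝ :=
  sInf {c : ℝ | 0 ≤ c ∧ ∀ v : EuclideanSpace ℝ (Fin n),
    -(c * ‖v‖ ^ 2) ≤ ⟪fderiv ℝ (gradient F) y v, v⟫}

set_option maxHeartbeats 2000000 in
/-- Lemma 8 of the paper: second-order guarantee for a block of `m` inexact
cubic Newton steps with lazy finite-difference Hessian, when the extra semidefinite condition
on the subproblem solutions holds. -/
theorem stmt_11 {n : ℕ} (hn : 1 ≤ n)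
    (f ψ : EuclideanSpace ℝ (Fin n) → ℝ) (Q : Set (EuclideanSpace ℝ (Fin n)))
    (L : ℝ) (hL : 0 ≤ L)
    (hf : ContDiff ℝ 2 f)
    (hLip : ∀ u v : EuclideanSpace ℝ (Fin n),
      ‖fderiv ℝ (gradient f) v - fderiv ℝ (gradient f) u‖ ≤ L * ‖v - u‖)
    (hψ2 : ContDiff ℝ 2 ψ) (hQconv : Convex ℝ Q) (hψconv : ConvexOn ℝ Q ψ)
    (ε : ℝ) (hε : 0 < ε) (m : ℕ) (hm : 1 ≤ m)
    (x : ℕ → EuclideanSpace ℝ (Fin n)) (hxQ : ∀ t ≤ m, x t ∈ Q)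
    (σ h : ℝ)
    (hσ : σ ≥ 2 ^ 4 * ((2 : ℝ) / 3) ^ ((1 : ℝ) / 3) * m * L)
    (hh : 0 < h)
    (hhle : h ≤ (3 * σ ^ ((3 : ℝ) / 2) * ε ^ ((3 : ℝ) / 2)
      / (2 ^ 7 * 192 * (n : ℝ) ^ ((3 : ℝ) / 2) * L ^ 3)) ^ ((1 : ℝ) / 3))
    (B : EuclideanSpace ℝ (Fin n) →L[ℝ] EuclideanSpace ℝ (Fin n))
    (hBsym : ∀ u v : EuclideanSpace ℝ (Fin n), ⟪B u, v⟫ = ⟪u, B v⟫)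
    (hB : ‖B - fderiv ℝ (gradient f) (x 0)‖ ≤ Real.sqrt n * L / 2 * h)
    (ψ' : ℕ → EuclideanSpace ℝ (Fin n))
    (hψ' : ∀ t < m, ∀ y : EuclideanSpace ℝ (Fin n),
      ψ (x (t + 1)) + ⟪ψ' (t + 1), y - x (t + 1)⟫ ≤ ψ y)
    (hdec : ∀ t < m,
      f (x t) + ⟪gradient f (x t), x (t + 1) - x t⟫
        + 1 / 2 * ⟪B (x (t + 1) - x t), x (t + 1) - x t⟫
        + σ / 6 * ‖x (t + 1) - x t‖ ^ 3 + ψ (x (t + 1)) ≤ f (x t) + ψ (x t))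
    (hmodel : ∀ t < m,
      ‖gradient f (x t) + B (x (t + 1) - x t)
          + (σ / 2 * ‖x (t + 1) - x t‖) • (x (t + 1) - x t) + ψ' (t + 1)‖ ≤
        σ / 4 * ‖x (t + 1) - x t‖ ^ 2)
    (hPSD : ∀ t < m, ∀ v : EuclideanSpace ℝ (Fin n),
      0 ≤ ⟪B v, v⟫ + σ * ‖x (t + 1) - x t‖ * ‖v‖ ^ 2
        + ⟪fderiv ℝ (gradient ψ) (x (t + 1)) v, v⟫) :
    (∃ t, 1 ≤ t ∧ t ≤ m ∧
        max ‖gradient f (x t) + ψ' t‖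
          (1 / σ * ((2 : ℝ) / 3) ^ ((10 : ℝ) / 3)
            * (negEigPart (fun y => f y + ψ y) (x t)) ^ 2) ≤ ε) ∨
      (f (x 0) + ψ (x 0)) - (f (x m) + ψ (x m)) ≥
        m * ε ^ ((3 : ℝ) / 2) / (2 * 192 * Real.sqrt σ) := by
  classical
  -- Degenerate case L = 0 is impossible
  by_cases hL0 : L = 0
  · exfalso
    rw [hL0] at hhle
    simp only [ne_eq, OfNat.ofNat_ne_zero, not_false_eq_true, zero_pow, mul_zero, div_zero,
      Real.zero_rpow (by norm_num : (1:ℝ)/3 ≠ 0)] at hhle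
    linarith
  have hLpos : 0 < L := lt_of_le_of_ne hL (Ne.symm hL0)
  have hm1 : (1:ℝ) ≤ (m:ℝ) := by exact_mod_cast hm
  have hσ13 : 13 * (m:ℝ) * L ≤ σ := by
    have hc := cbrt_twothirds_ge
    have hmL : (0:ℝ) ≤ (m:ℝ) * L := mul_nonneg (by positivity) hL
    nlinarith [hσ]
  have hσpos : 0 < σ := lt_of_lt_of_le (by nlinarith) hσ13
  have hL13 : L ≤ σ / 13 := by nlinarith
  set s := Real.sqrt σ with hs_def
  set e := Real.sqrt ε with he_def
  have hspos : 0 < s := Real.sqrt_pos.mpr hσpos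
  have hepos : 0 < e := Real.sqrt_pos.mpr hε
  have hs2 : s ^ 2 = σ := Real.sq_sqrt hσpos.le
  have he2 : e ^ 2 = ε := Real.sq_sqrt hε.le
  set ρ := e / s with hρ_def
  have hρpos : 0 < ρ := div_pos hepos hspos
  have hεeq : ε = σ * ρ ^ 2 := by
    rw [hρ_def, ← hs2, ← he2]
    field_simp
  have hseρ : σ * ρ = s * e := by
    rw [← hs2, hρ_def]; field_simp
  have hε32 : ε ^ ((3:ℝ)/2) = e ^ (3:ℕ) := rpow_three_halves_eq hε.le
  -- bound on the Hessian perturbation δ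
  set δ := Real.sqrt n * L / 2 * h with hδ_def
  have hδnn : 0 ≤ δ := by
    have : (0:ℝ) ≤ Real.sqrt n := Real.sqrt_nonneg _
    positivity
  have hδ : δ ≤ σ * ρ / 40 := by
    rw [hseρ]
    have hsn : (0:ℝ) < Real.sqrt n := Real.sqrt_pos.mpr (by exact_mod_cast hn)
    have hXnn : (0:ℝ) ≤ 3 * σ ^ ((3:ℝ)/2) * ε ^ ((3:ℝ)/2)
        / (2 ^ 7 * 192 * (n:ℝ) ^ ((3:ℝ)/2) * L ^ 3) := by positivity
    have hcube : h ^ (3:ℕ) ≤ 3 * σ ^ ((3:ℝ)/2) * ε ^ ((3:ℝ)/2)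
        / (2 ^ 7 * 192 * (n:ℝ) ^ ((3:ℝ)/2) * L ^ 3) := by
      have h1 := pow_le_pow_left₀ hh.le hhle 3
      rwa [← Real.rpow_natCast (_ ^ ((1:ℝ)/3)) 3, ← Real.rpow_mul hXnn,
        show (1:ℝ)/3 * ((3:ℕ):ℝ) = 1 by norm_num, Real.rpow_one] at h1
    have hrw : 3 * σ ^ ((3:ℝ)/2) * ε ^ ((3:ℝ)/2) / (2 ^ 7 * 192 * (n:ℝ) ^ ((3:ℝ)/2) * L ^ 3)
        = 3 * s ^ (3:ℕ) * e ^ (3:ℕ) / (2 ^ 7 * 192 * (Real.sqrt n) ^ (3:ℕ) * L ^ 3) := by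
      rw [rpow_three_halves_eq hσpos.le, rpow_three_halves_eq hε.le,
        rpow_three_halves_eq (by positivity : (0:ℝ) ≤ (n:ℝ))]
    rw [hrw] at hcube
    have hδ3 : δ ^ (3:ℕ) ≤ (s * e / 40) ^ (3:ℕ) := by
      have hδ3eq : δ ^ (3:ℕ) = (Real.sqrt n) ^ (3:ℕ) * L ^ (3:ℕ) * h ^ (3:ℕ) / 8 := by
        rw [hδ_def]; ring
      have hkey : (Real.sqrt n) ^ (3:ℕ) * L ^ (3:ℕ) * h ^ (3:ℕ) / 8
          ≤ (Real.sqrt n) ^ (3:ℕ) * L ^ (3:ℕ)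
            * (3 * s ^ (3:ℕ) * e ^ (3:ℕ) / (2 ^ 7 * 192 * (Real.sqrt n) ^ (3:ℕ) * L ^ 3)) / 8 := by
        have := mul_le_mul_of_nonneg_left hcube
          (by positivity : (0:ℝ) ≤ (Real.sqrt n) ^ (3:ℕ) * L ^ (3:ℕ))
        linarith
      have hsimp : (Real.sqrt n) ^ (3:ℕ) * L ^ (3:ℕ)
            * (3 * s ^ (3:ℕ) * e ^ (3:ℕ) / (2 ^ 7 * 192 * (Real.sqrt n) ^ (3:ℕ) * L ^ 3)) / 8
          = 3 * s ^ (3:ℕ) * e ^ (3:ℕ) / 196608 := by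
        field_simp
        ring
      rw [hδ3eq]
      refine (hkey.trans (le_of_eq hsimp)).trans ?_
      have : (s * e / 40) ^ (3:ℕ) = s ^ (3:ℕ) * e ^ (3:ℕ) / 64000 := by ring
      rw [this]
      nlinarith [pow_pos hspos 3, pow_pos hepos 3, mul_pos (pow_pos hspos 3) (pow_pos hepos 3)]
    exact le_of_pow_le_pow_left₀ (by norm_num) (by positivity) hδ3
  
  -- step sizes and their sums
  set r : ℕ → ℝ := fun t => ‖x (t+1) - x t‖ with hr_def
  set B1 := ∑ t ∈ Finset.range m, r t with hB1_def
  set B2 := ∑ t ∈ Finset.range m, r t ^ 2 with hB2_def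
  set B3 := ∑ t ∈ Finset.range m, r t ^ 3 with hB3_def
  have hrnn : ∀ t, 0 ≤ r t := fun t => norm_nonneg _
  have hB1nn : 0 ≤ B1 := Finset.sum_nonneg fun t _ => hrnn t
  have hB2nn : 0 ≤ B2 := Finset.sum_nonneg fun t _ => pow_nonneg (hrnn t) 2
  have hB3nn : 0 ≤ B3 := Finset.sum_nonneg fun t _ => pow_nonneg (hrnn t) 3
  have hxB1 : ∀ t ≤ m, ‖x t - x 0‖ ≤ B1 := by
    intro t ht
    have h1 := dist_le_range_sum_dist x t
    have h2 : ∀ i, dist (x i) (x (i+1)) = r i := fun i => by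
      rw [dist_eq_norm']
    have h3 : ∑ i ∈ Finset.range t, dist (x i) (x (i+1)) = ∑ i ∈ Finset.range t, r i :=
      Finset.sum_congr rfl fun i _ => h2 i
    have h4 : ∑ i ∈ Finset.range t, r i ≤ B1 :=
      Finset.sum_le_sum_of_subset_of_nonneg
        (Finset.range_subset_range.mpr ht) (fun i _ _ => hrnn i)
    calc ‖x t - x 0‖ = dist (x 0) (x t) := by rw [dist_comm, dist_eq_norm]
      _ ≤ ∑ i ∈ Finset.range t, dist (x i) (x (i+1)) := h1
      _ ≤ B1 := by rw [h3]; exact h4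
  have hHB : ∀ t ≤ m, ‖fderiv ℝ (gradient f) (x t) - B‖ ≤ δ + L * B1 := by
    intro t ht
    have h1 : fderiv ℝ (gradient f) (x t) - B
        = (fderiv ℝ (gradient f) (x t) - fderiv ℝ (gradient f) (x 0))
          + (fderiv ℝ (gradient f) (x 0) - B) := by abel
    have h2 : ‖fderiv ℝ (gradient f) (x t) - fderiv ℝ (gradient f) (x 0)‖ ≤ L * B1 := by
      refine (hLip (x 0) (x t)).trans ?_
      exact mul_le_mul_of_nonneg_left (hxB1 t ht) hL
    have h3 : ‖fderiv ℝ (gradient f) (x 0) - B‖ ≤ δ := by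
      rw [norm_sub_rev]; exact hB
    calc ‖fderiv ℝ (gradient f) (x t) - B‖ ≤ _ + _ := h1 ▸ norm_add_le _ _
      _ ≤ δ + L * B1 := by linarith
  have hquad : ∀ t ≤ m, ∀ v : EuclideanSpace ℝ (Fin n),
      |⟪fderiv ℝ (gradient f) (x t) v - B v, v⟫| ≤ (δ + L * B1) * ‖v‖ ^ 2 := by
    intro t ht v
    have h1 := abs_real_inner_le_norm (fderiv ℝ (gradient f) (x t) v - B v) v
    have h2 : ‖fderiv ℝ (gradient f) (x t) v - B v‖ ≤ (δ + L * B1) * ‖v‖ := by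
      have h3 := (fderiv ℝ (gradient f) (x t) - B).le_opNorm v
      rw [ContinuousLinearMap.sub_apply] at h3
      exact h3.trans (mul_le_mul_of_nonneg_right (hHB t ht) (norm_nonneg v))
    calc |⟪fderiv ℝ (gradient f) (x t) v - B v, v⟫| ≤ _ := h1
      _ ≤ ((δ + L * B1) * ‖v‖) * ‖v‖ := mul_le_mul_of_nonneg_right h2 (norm_nonneg v)
      _ = (δ + L * B1) * ‖v‖ ^ 2 := by ring
  -- per-step decrease of F
  have hstep : ∀ t < m, (σ - L)/6 * r t ^ 3 - (δ + L * B1)/2 * r t ^ 2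
      ≤ (f (x t) + ψ (x t)) - (f (x (t+1)) + ψ (x (t+1))) := by
    intro t ht
    have htay := func_taylor hf hLip (x t) (x (t+1))
    have hde := hdec t ht
    have hq := hquad t (le_of_lt ht) (x (t+1) - x t)
    rw [abs_le] at hq
    have hq2 : ⟪fderiv ℝ (gradient f) (x t) (x (t+1) - x t), x (t+1) - x t⟫
        - ⟪B (x (t+1) - x t), x (t+1) - x t⟫ ≤ (δ + L * B1) * r t ^ 2 := by
      have := hq.2
      rw [inner_sub_left] at this
      exact this
    linarith
  -- telescoped decrease
  have htel : (f (x 0) + ψ (x 0)) - (f (x m) + ψ (x m))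
      = ∑ t ∈ Finset.range m, ((f (x t) + ψ (x t)) - (f (x (t+1)) + ψ (x (t+1)))) :=
    (Finset.sum_range_sub' (fun t => f (x t) + ψ (x t)) m).symm
  have hD : (σ - L)/6 * B3 - (δ + L * B1)/2 * B2
      ≤ (f (x 0) + ψ (x 0)) - (f (x m) + ψ (x m)) := by
    rw [htel]
    have h1 : ∑ t ∈ Finset.range m, ((σ - L)/6 * r t ^ 3 - (δ + L * B1)/2 * r t ^ 2)
        ≤ ∑ t ∈ Finset.range m, ((f (x t) + ψ (x t)) - (f (x (t+1)) + ψ (x (t+1)))) :=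
      Finset.sum_le_sum fun t ht => hstep t (Finset.mem_range.mp ht)
    refine le_trans (le_of_eq ?_) h1
    rw [Finset.sum_sub_distrib, ← Finset.mul_sum, ← Finset.mul_sum, hB2_def, hB3_def]
  -- B1 * B2 ≤ m * B3
  have hBB : B1 * B2 ≤ (m:ℝ) * B3 := by
    rw [hB1_def, hB2_def, Finset.sum_mul_sum]
    have h1 : ∀ i ∈ Finset.range m, ∀ j ∈ Finset.range m,
        r i * r j ^ 2 ≤ r i ^ 3 / 3 + 2/3 * r j ^ 3 := by
      intro i _ j _
      nlinarith [sq_nonneg (r i - r j), hrnn i, hrnn j,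
        mul_nonneg (sq_nonneg (r i - r j)) (hrnn i),
        mul_nonneg (sq_nonneg (r i - r j)) (hrnn j)]
    calc (∑ i ∈ Finset.range m, ∑ j ∈ Finset.range m, r i * r j ^ 2)
        ≤ ∑ i ∈ Finset.range m, ∑ j ∈ Finset.range m, (r i ^ 3 / 3 + 2/3 * r j ^ 3) :=
          Finset.sum_le_sum fun i hi => Finset.sum_le_sum fun j hj => h1 i hi j hj
      _ = (m:ℝ) * B3 := by
          simp only [Finset.sum_add_distrib, Finset.sum_const, Finset.card_range,
            nsmul_eq_mul, ← Finset.mul_sum, ← Finset.sum_div]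
          rw [hB3_def]
          ring
  -- 3 ρ B2 ≤ 2 B3 + m ρ³
  have hB2ρ : 3 * ρ * B2 ≤ 2 * B3 + (m:ℝ) * ρ ^ 3 := by
    have h1 : ∀ t ∈ Finset.range m, 3 * ρ * r t ^ 2 ≤ 2 * r t ^ 3 + ρ ^ 3 := by
      intro t _
      nlinarith [mul_nonneg (sq_nonneg (r t - ρ)) (hrnn t),
        mul_nonneg (sq_nonneg (r t - ρ)) hρpos.le]
    calc 3 * ρ * B2 = ∑ t ∈ Finset.range m, 3 * ρ * r t ^ 2 := by
          rw [hB2_def, Finset.mul_sum]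
      _ ≤ ∑ t ∈ Finset.range m, (2 * r t ^ 3 + ρ ^ 3) := Finset.sum_le_sum h1
      _ = 2 * B3 + (m:ℝ) * ρ ^ 3 := by
          simp only [Finset.sum_add_distrib, Finset.sum_const, Finset.card_range,
            nsmul_eq_mul, ← Finset.mul_sum]
          rw [hB3_def]
  
  -- main case split
  by_cases hex : ∃ t, 1 ≤ t ∧ t ≤ m ∧
      max ‖gradient f (x t) + ψ' t‖
        (1 / σ * ((2 : ℝ) / 3) ^ ((10 : ℝ) / 3)
          * (negEigPart (fun y => f y + ψ y) (x t)) ^ 2) ≤ ε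
  · exact Or.inl hex
  right
  push_neg at hex
  -- every measured quantity is large
  have hδL : ∀ (_ : L * B1 ≤ s * e / 2), δ + L * B1 ≤ 21/40 * (σ * ρ) := by
    intro hsm
    have h1 : L * B1 ≤ σ * ρ / 2 := by rw [hseρ]; linarith only [hsm]
    linarith only [h1, hδ]
  -- lower bound on each step size in the small-drift branch
  have hrt : L * B1 ≤ s * e / 2 → ∀ t < m, 7/10 * ρ ≤ r t := by
    intro hsm t ht
    have hmax := hex (t+1) (by omega) (by omega)
    rw [lt_max_iff] at hmax
    have hδL' := hδL hsm
    rcases hmax with hg | heig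
    · -- gradient is large
      have hgt : ‖gradient f (x (t+1)) - gradient f (x t)
          - fderiv ℝ (gradient f) (x t) (x (t+1) - x t)‖ ≤ L/2 * r t ^ 2 :=
        grad_taylor hf hLip (x t) (x (t+1))
      have hn2 : ‖fderiv ℝ (gradient f) (x t) (x (t+1) - x t) - B (x (t+1) - x t)‖
          ≤ (δ + L * B1) * r t := by
        have h3 := (fderiv ℝ (gradient f) (x t) - B).le_opNorm (x (t+1) - x t)
        rw [ContinuousLinearMap.sub_apply] at h3
        exact h3.trans (mul_le_mul_of_nonneg_right (hHB t (by omega)) (norm_nonneg _))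
      have hn3 := hmodel t ht
      have hn4 : ‖(σ/2 * ‖x (t+1) - x t‖) • (x (t+1) - x t)‖ = σ/2 * r t * r t := by
        rw [norm_smul, Real.norm_eq_abs,
          abs_of_nonneg (mul_nonneg (by positivity) (norm_nonneg _))]
      have hkey := norm_comb
        (gradient f (x (t+1)) - gradient f (x t)
          - fderiv ℝ (gradient f) (x t) (x (t+1) - x t))
        (fderiv ℝ (gradient f) (x t) (x (t+1) - x t) - B (x (t+1) - x t))
        (gradient f (x t) + B (x (t+1) - x t)
          + (σ/2 * ‖x (t+1) - x t‖) • (x (t+1) - x t) + ψ' (t+1))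
        ((σ/2 * ‖x (t+1) - x t‖) • (x (t+1) - x t))
      have hsplitv : (gradient f (x (t+1)) - gradient f (x t)
            - fderiv ℝ (gradient f) (x t) (x (t+1) - x t))
          + (fderiv ℝ (gradient f) (x t) (x (t+1) - x t) - B (x (t+1) - x t))
          + (gradient f (x t) + B (x (t+1) - x t)
            + (σ/2 * ‖x (t+1) - x t‖) • (x (t+1) - x t) + ψ' (t+1))
          - (σ/2 * ‖x (t+1) - x t‖) • (x (t+1) - x t)
          = gradient f (x (t+1)) + ψ' (t+1) := by abel
      rw [hsplitv, hn4] at hkey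
      have hvle : ε < L/2 * r t ^ 2 + (δ + L * B1) * r t + σ/4 * r t ^ 2 + σ/2 * r t * r t := by
        calc ε < ‖gradient f (x (t+1)) + ψ' (t+1)‖ := hg
          _ ≤ _ + _ + _ + σ/2 * r t * r t := hkey
          _ ≤ L/2 * r t ^ 2 + (δ + L * B1) * r t + σ/4 * r t ^ 2 + σ/2 * r t * r t := by
              linarith only [hgt, hn2, hn3]
      rw [hεeq] at hvle
      exact grad_case_arith hσpos hρpos (hrnn t) hL13 hδL' hvle
    · -- eigenvalue is large
      set ξ := negEigPart (fun y => f y + ψ y) (x (t+1)) with hξ_def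
      have hc0nn : 0 ≤ σ * r t + (δ + L * B1) := by
        have w1 := mul_nonneg hL hB1nn
        have w2 := mul_nonneg hσpos.le (hrnn t)
        linarith only [w1, w2, hδnn]
      have hmem : (σ * r t + (δ + L * B1)) ∈ {c : ℝ | 0 ≤ c ∧
          ∀ v : EuclideanSpace ℝ (Fin n), -(c * ‖v‖ ^ 2)
            ≤ ⟪fderiv ℝ (gradient (fun y => f y + ψ y)) (x (t+1)) v, v⟫} := by
        refine ⟨hc0nn, fun v => ?_⟩
        have h1 := hPSD t ht v
        have hre : ‖x (t+1) - x t‖ = r t := rfl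
        rw [hre] at h1
        have h2 := hquad (t+1) (by omega) v
        rw [abs_le] at h2
        have h4 := h2.1
        rw [inner_sub_left] at h4
        have h3 := hessF_apply hf hψ2 (x (t+1)) v
        rw [h3, inner_add_left]
        have hexp : (σ * r t + (δ + L * B1)) * ‖v‖ ^ 2
            = σ * r t * ‖v‖ ^ 2 + (δ + L * B1) * ‖v‖ ^ 2 := by ring
        linarith only [h1, h4, hexp]
      have hbdd : BddBelow {c : ℝ | 0 ≤ c ∧
          ∀ v : EuclideanSpace ℝ (Fin n), -(c * ‖v‖ ^ 2)
            ≤ ⟪fderiv ℝ (gradient (fun y => f y + ψ y)) (x (t+1)) v, v⟫} :=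
        ⟨0, fun c hc => hc.1⟩
      have hξle : ξ ≤ σ * r t + (δ + L * B1) := csInf_le hbdd hmem
      have hξ0 : 0 ≤ ξ := le_csInf ⟨_, hmem⟩ (fun b hb => hb.1)
      have hq23 := twothirds_pow_tenthirds_le
      have h5 : σ * ε < 26/100 * ξ ^ 2 := by
        have h6 : σ * ε < σ * (1/σ * ((2:ℝ)/3) ^ ((10:ℝ)/3) * ξ ^ 2) :=
          (mul_lt_mul_iff_right₀ hσpos).mpr heig
        have h7 : σ * (1/σ * ((2:ℝ)/3) ^ ((10:ℝ)/3) * ξ ^ 2)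
            = ((2:ℝ)/3) ^ ((10:ℝ)/3) * ξ ^ 2 := by
          field_simp
        rw [h7] at h6
        exact h6.trans_le (mul_le_mul_of_nonneg_right hq23 (sq_nonneg ξ))
      have hse2 : (s * e) ^ 2 = σ * ε := by rw [mul_pow, hs2, he2]
      have h7 : (19/10 * (s * e)) ^ 2 < ξ ^ 2 := by
        have he3 : (19/10 * (s * e)) ^ 2 = 361/100 * (σ * ε) := by
          rw [mul_pow, hse2]; ring
        rw [he3]
        linarith only [h5, sq_nonneg ξ]
      have h8 : 19/10 * (s * e) < ξ := lt_of_pow_lt_pow_left₀ 2 hξ0 h7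
      have h9 : 19/10 * (s * e) = 19/10 * (σ * ρ) := by rw [hseρ]
      have h10 : σ * (11/8 * ρ) < σ * r t := by
        have : σ * (11/8 * ρ) = 11/8 * (σ * ρ) := by ring
        rw [this]
        linarith only [hξle, h8, hδL', h9]
      have h11 : 11/8 * ρ < r t := (mul_lt_mul_iff_right₀ hσpos).mp h10
      linarith only [h11, hρpos.le]
  -- lower bound on B3 in both branches
  have hB3low : 343/1000 * ((m:ℝ) * ρ ^ 3) ≤ B3 := by
    by_cases hbig : s * e / 2 < L * B1
    · -- big total drift
      have hB1low : 13/2 * ((m:ℝ) * ρ) ≤ B1 := by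
        have h3 : 13 * (m:ℝ) * (s * e / 2) < 13 * (m:ℝ) * (L * B1) :=
          mul_lt_mul_of_pos_left hbig (by positivity)
        have h4 : 13 * (m:ℝ) * (L * B1) ≤ σ * B1 := by
          have := mul_le_mul_of_nonneg_right hσ13 hB1nn
          nlinarith [this]
        have h6 : σ * (13/2 * ((m:ℝ) * ρ)) = 13 * (m:ℝ) * (s * e / 2) := by
          have he1 : σ * (13/2 * ((m:ℝ) * ρ)) = 13/2 * (m:ℝ) * (σ * ρ) := by ring
          rw [he1, hseρ]; ring
        have h7 : σ * (13/2 * ((m:ℝ) * ρ)) < σ * B1 := by linarith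
        exact le_of_lt ((mul_lt_mul_iff_right₀ hσpos).mp h7)
      have hpow := pow_sum_div_card_le_sum_pow (s := Finset.range m) (f := r)
        (fun i _ => hrnn i) 2
      rw [Finset.card_range] at hpow
      have hm2 : (0:ℝ) < ((m:ℝ)) ^ 2 := by positivity
      have hB1c : (13/2 * ((m:ℝ) * ρ)) ^ 3 ≤ B1 ^ 3 :=
        pow_le_pow_left₀ (by positivity) hB1low 3
      have hq1 : 343/1000 * ((m:ℝ) * ρ ^ 3) ≤ (13/2 * ((m:ℝ) * ρ)) ^ 3 / ((m:ℝ)) ^ 2 := by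
        have he2' : (13/2 * ((m:ℝ) * ρ)) ^ 3 / ((m:ℝ)) ^ 2 = 2197/8 * ((m:ℝ) * ρ ^ 3) := by
          field_simp
          ring
        rw [he2']
        nlinarith [mul_nonneg (Nat.cast_nonneg m : (0:ℝ) ≤ (m:ℝ)) (pow_nonneg hρpos.le 3)]
      calc 343/1000 * ((m:ℝ) * ρ ^ 3) ≤ (13/2 * ((m:ℝ) * ρ)) ^ 3 / ((m:ℝ)) ^ 2 := hq1
        _ ≤ B1 ^ 3 / ((m:ℝ)) ^ 2 := (div_le_div_iff_of_pos_right hm2).mpr hB1c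
        _ ≤ B3 := by
            have : B1 ^ (2+1) / ((m:ℝ)) ^ 2 ≤ ∑ t ∈ Finset.range m, r t ^ (2+1) := hpow
            simpa using this
    · -- small total drift
      push_neg at hbig
      have h1 := hrt hbig
      have h2 : ∀ t ∈ Finset.range m, (7/10 * ρ) ^ 3 ≤ r t ^ 3 := by
        intro t ht
        exact pow_le_pow_left₀ (by positivity) (h1 t (Finset.mem_range.mp ht)) 3
      calc 343/1000 * ((m:ℝ) * ρ ^ 3) = ∑ _t ∈ Finset.range m, (7/10 * ρ) ^ 3 := by
            rw [Finset.sum_const, Finset.card_range, nsmul_eq_mul]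
            ring
        _ ≤ B3 := Finset.sum_le_sum h2
  -- final arithmetic
  have hgoal_eq : (m:ℝ) * ε ^ ((3:ℝ)/2) / (2 * 192 * s) = σ * ((m:ℝ) * ρ ^ 3) / 384 := by
    rw [hε32]
    have h1 : σ * ((m:ℝ) * ρ ^ 3) = (m:ℝ) * e ^ 3 / s := by
      rw [hρ_def, ← hs2]
      field_simp
    rw [h1]
    field_simp
    ring
  rw [ge_iff_le, hgoal_eq]
  -- linear combination
  have hD' : (f (x 0) + ψ (x 0)) - (f (x m) + ψ (x m))
      ≥ σ * B3 / 6 - L * B3 / 6 - δ * B2 / 2 - L * (B1 * B2) / 2 := by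
    have hexp : (σ - L)/6 * B3 - (δ + L * B1)/2 * B2
        = σ * B3 / 6 - L * B3 / 6 - δ * B2 / 2 - L * (B1 * B2) / 2 := by ring
    linarith [hD, hexp.symm.le, hexp.le]
  have hLB3 : L * B3 ≤ σ * B3 / 13 := by
    have := mul_le_mul_of_nonneg_right hL13 hB3nn
    nlinarith [this]
  have hLBB : L * (B1 * B2) ≤ σ * B3 / 13 := by
    have s1 : L * (B1 * B2) ≤ L * ((m:ℝ) * B3) := mul_le_mul_of_nonneg_left hBB hL
    have s2 := mul_le_mul_of_nonneg_right hσ13 hB3nn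
    nlinarith [s1, s2]
  have hδB2 : δ * B2 ≤ σ * B3 / 60 + σ * ((m:ℝ) * ρ ^ 3) / 120 := by
    have s1 : δ * B2 ≤ σ * ρ / 40 * B2 := mul_le_mul_of_nonneg_right hδ hB2nn
    have s3 : σ/120 * (3 * ρ * B2) ≤ σ/120 * (2 * B3 + (m:ℝ) * ρ ^ 3) :=
      mul_le_mul_of_nonneg_left hB2ρ (by positivity)
    nlinarith [s1, s3]
  have hQP : 343/1000 * (σ * ((m:ℝ) * ρ ^ 3)) ≤ σ * B3 := by
    have := mul_le_mul_of_nonneg_left hB3low hσpos.le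
    nlinarith [this]
  have hQnn : (0:ℝ) ≤ σ * ((m:ℝ) * ρ ^ 3) := by positivity
  have hD2 : (f (x 0) + ψ (x 0)) - (f (x m) + ψ (x m))
      ≥ σ * B3/6 - σ * B3/78 - (σ * B3/60 + σ * ((m:ℝ) * ρ ^ 3)/120)/2 - σ * B3/26 := by
    linarith only [hD', hLB3, hLBB, hδB2]
  exact final_arith hQnn hD2 hQP
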